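/- Let L be a finite lattice which is not a chain. Then L contains a unique maximal sublattice B that is a block, and L has the form C₁ ⊕ B, or B ⊕ C₂, or C₁ ⊕ B ⊕ C₂, where C₁ and C₂ are chains. Moreover η(L) = η(B) and Red(L) = Red(B). -/

import Mathlib

/-- An element of a lattice is join-reducible if it is the join of two elements
both distinct from it. -/
def JoinReducible {α : Type*} [Lattice α] (x : α) : Prop :=
  ∃ y z : α, y ≠ x ∧ z ≠ x ∧ y ⊔ z = x

/-- An element of a lattice is meet-reducible if it is the meet of two elements
both distinct from it. -/
def MeetReducible {α : Type*} [Lattice α] (x : α) : Prop :=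
  ∃ y z : α, y ≠ x ∧ z ≠ x ∧ y ⊓ z = x

/-- An element is reducible if it is join-reducible or meet-reducible. -/
def Reducible {α : Type*} [Lattice α] (x : α) : Prop :=
  JoinReducible x ∨ MeetReducible x

/-- `Red(L)`: the set of reducible elements of the lattice. -/
def RedSet (α : Type*) [Lattice α] : Set α := {x | Reducible x}

/-- `Irr(L)`: the set of doubly irreducible (i.e. non-reducible) elements. -/
def IrrSet (α : Type*) [Lattice α] : Set α := {x | ¬ Reducible x}

/-- The cover graph of a poset: vertices are the elements, edges are covering pairs. -/
def coverGraph (α : Type*) [PartialOrder α] : SimpleGraph α where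
  Adj x y := x ⋖ y ∨ y ⋖ x
  symm := ⟨fun _ _ h => h.symm⟩
  loopless := ⟨fun x h => by rcases h with h | h <;> exact h.lt.false⟩

/-- The nullity of a (finite) poset: `m - n + c` where `m` is the number of edges,
`n` the number of vertices and `c` the number of connected components of the cover graph. -/
noncomputable def nullity (α : Type*) [PartialOrder α] : ℤ :=
  (Nat.card (coverGraph α).edgeSet : ℤ) - (Nat.card α : ℤ)
    + (Nat.card (coverGraph α).ConnectedComponent : ℤ)

/-- A subset of a lattice which is a sublattice and, with the induced order, a block:
it has a greatest element which is join-reducible in it, and a least element which is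
meet-reducible in it. -/
def IsBlockSet {α : Type*} [Lattice α] (s : Set α) : Prop :=
  (∀ x ∈ s, ∀ y ∈ s, x ⊓ y ∈ s ∧ x ⊔ y ∈ s) ∧
  (∃ t ∈ s, (∀ x ∈ s, x ≤ t) ∧ ∃ y ∈ s, ∃ z ∈ s, y ≠ t ∧ z ≠ t ∧ y ⊔ z = t) ∧
  (∃ b ∈ s, (∀ x ∈ s, b ≤ x) ∧ ∃ y ∈ s, ∃ z ∈ s, y ≠ b ∧ z ≠ b ∧ y ⊓ z = b)

/-- The set of elements of `s` that are reducible within the sublattice `s`. -/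
def RedIn {α : Type*} [Lattice α] (s : Set α) : Set α :=
  {x | x ∈ s ∧ ((∃ y ∈ s, ∃ z ∈ s, y ≠ x ∧ z ≠ x ∧ y ⊔ z = x) ∨
    (∃ y ∈ s, ∃ z ∈ s, y ≠ x ∧ z ≠ x ∧ y ⊓ z = x))}



private lemma aux_covby_le {β : Type*} [PartialOrder β] [Finite β] {x y : β}
    (h : x < y) : ∃ z, x ⋖ z ∧ z ≤ y := by
  classical
  cases nonempty_fintype β
  obtain ⟨z, hz, hmin⟩ := Finset.exists_minimal
    (s := Finset.univ.filter fun w => x < w ∧ w ≤ y) ⟨y, by simp [h]⟩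
  simp only [Finset.mem_filter, Finset.mem_univ, true_and] at hz hmin
  exact ⟨z, ⟨hz.1, fun c hc hcz => hcz.not_ge (hmin ⟨hc, hcz.le.trans hz.2⟩ hcz.le)⟩, hz.2⟩

private lemma aux_le_covby {β : Type*} [PartialOrder β] [Finite β] {x y : β}
    (h : x < y) : ∃ z, x ≤ z ∧ z ⋖ y := by
  classical
  cases nonempty_fintype β
  obtain ⟨z, hz, hmax⟩ := Finset.exists_maximal
    (s := Finset.univ.filter fun w => x ≤ w ∧ w < y) ⟨x, by simp [h, le_rfl]⟩
  simp only [Finset.mem_filter, Finset.mem_univ, true_and] at hz hmax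
  exact ⟨z, hz.1, hz.2, fun c hc hcy => hc.not_ge (hmax ⟨hz.1.trans hc.le, hcy⟩ hc.le)⟩

private lemma aux_reach_aux {β : Type*} [PartialOrder β] [Finite β] :
    ∀ n : ℕ, ∀ x y : β, x ≤ y →
      Nat.card {w : β // x ≤ w ∧ w ≤ y} ≤ n → (coverGraph β).Reachable x y := by
  classical
  cases nonempty_fintype β
  intro n
  induction n with
  | zero =>
    intro x y hxy hc
    have : Nat.card {w : β // x ≤ w ∧ w ≤ y} ≠ 0 := by
      have : Nonempty {w : β // x ≤ w ∧ w ≤ y} := ⟨⟨x, le_rfl, hxy⟩⟩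
      simp [Nat.card_ne_zero, this]
    omega
  | succ n ih =>
    intro x y hxy hc
    rcases eq_or_lt_of_le hxy with rfl | hlt
    · exact SimpleGraph.Reachable.refl x
    obtain ⟨z, hxz, hzy⟩ := aux_covby_le hlt
    have hedge : (coverGraph β).Adj x z := Or.inl hxz
    refine (hedge.reachable).trans (ih z y hzy ?_)
    have hcard : Nat.card {w : β // z ≤ w ∧ w ≤ y} < Nat.card {w : β // x ≤ w ∧ w ≤ y} := by
      rw [Nat.card_eq_fintype_card, Nat.card_eq_fintype_card]
      apply Fintype.card_lt_of_injective_of_notMem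
        (fun w => (⟨w.1, hxz.lt.le.trans w.2.1, w.2.2⟩ : {w : β // x ≤ w ∧ w ≤ y}))
        (fun u v huv => Subtype.ext (show (u : β) = v from congrArg Subtype.val huv))
        (b := ⟨x, le_rfl, hxy⟩)
      rintro ⟨u, hu⟩
      have h1 : (u : β) = x := congrArg Subtype.val hu
      exact absurd (h1 ▸ u.2.1) hxz.lt.not_ge
    omega

private lemma aux_reach {β : Type*} [PartialOrder β] [Finite β] {x y : β} (h : x ≤ y) :
    (coverGraph β).Reachable x y :=
  aux_reach_aux _ x y h le_rfl

private lemma aux_cc {β : Type*} [PartialOrder β] [Finite β] [Nonempty β]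
    (hdir : ∀ x y : β, ∃ z, x ≤ z ∧ y ≤ z) :
    Nat.card (coverGraph β).ConnectedComponent = 1 := by
  haveI : Subsingleton (coverGraph β).ConnectedComponent := by
    constructor
    intro c d
    induction c using SimpleGraph.ConnectedComponent.ind with | _ u =>
    induction d using SimpleGraph.ConnectedComponent.ind with | _ v =>
    obtain ⟨z, hu, hv⟩ := hdir u v
    exact SimpleGraph.ConnectedComponent.eq.mpr ((aux_reach hu).trans (aux_reach hv).symm)
  haveI : Nonempty (coverGraph β).ConnectedComponent :=
    ⟨(coverGraph β).connectedComponentMk (Classical.arbitrary β)⟩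
  exact Nat.card_unique

private lemma aux_edge_card {β : Type*} [PartialOrder β] :
    Nat.card (coverGraph β).edgeSet = {p : β × β | p.1 ⋖ p.2}.ncard := by
  rw [← Nat.card_coe_set_eq]
  refine (Nat.card_eq_of_bijective
    (fun q => (⟨s(q.1.1, q.1.2), Or.inl q.2⟩ : (coverGraph β).edgeSet)) ⟨?_, ?_⟩).symm
  · rintro ⟨⟨u, v⟩, huv⟩ ⟨⟨u', v'⟩, huv'⟩ h
    have h : s(u, v) = s(u', v') := congrArg Subtype.val h
    rw [Sym2.eq_iff] at h
    rcases h with ⟨rfl, rfl⟩ | ⟨rfl, rfl⟩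
    · rfl
    · exact absurd huv'.lt (not_lt_of_gt huv.lt)
  · rintro ⟨e, he⟩
    induction e using Sym2.ind with | _ u v =>
    rcases he with h | h
    · exact ⟨⟨(u, v), h⟩, rfl⟩
    · exact ⟨⟨(v, u), h⟩, Subtype.ext (Sym2.eq_swap)⟩
private lemma aux_nullity {α : Type*} [Lattice α] [Fintype α] {a b : α} (hab : a ≤ b)
    (hca : ∀ x : α, x ≤ a ∨ a ≤ x) (hcb : ∀ x : α, x ≤ b ∨ b ≤ x)
    (hch1 : ∀ x y : α, x ≤ a → y ≤ a → x ≤ y ∨ y ≤ x)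
    (hch2 : ∀ x y : α, b ≤ x → b ≤ y → x ≤ y ∨ y ≤ x) :
    nullity ↥(Set.Icc a b) = nullity α := by
  classical
  haveI : Nonempty α := ⟨a⟩
  haveI : Nonempty ↥(Set.Icc a b) := ⟨⟨a, le_rfl, hab⟩⟩
  -- cover relation transfer between the interval and the ambient lattice
  have hcov : ∀ p q : ↥(Set.Icc a b), (p ⋖ q) ↔ ((p : α) ⋖ (q : α)) := by
    intro p q
    constructor
    · rintro ⟨h1, h2⟩
      refine ⟨Subtype.coe_lt_coe.mpr h1, fun c hc1 hc2 => ?_⟩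
      have hcB : c ∈ Set.Icc a b := ⟨p.2.1.trans hc1.le, hc2.le.trans q.2.2⟩
      exact h2 (show p < (⟨c, hcB⟩ : ↥(Set.Icc a b)) from Subtype.mk_lt_mk.mpr hc1)
        (show (⟨c, hcB⟩ : ↥(Set.Icc a b)) < q from Subtype.mk_lt_mk.mpr hc2)
    · rintro ⟨h1, h2⟩
      exact ⟨Subtype.coe_lt_coe.mp h1,
        fun c hc1 hc2 => h2 (Subtype.coe_lt_coe.mpr hc1) (Subtype.coe_lt_coe.mpr hc2)⟩
  have hcov_le_a : ∀ x y : α, x ⋖ y → x < a → y ≤ a := by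
    intro x y h hx
    rcases hca y with h' | h'
    · exact h'
    · rcases h'.lt_or_eq with h' | h'
      · exact absurd h' (h.2 hx)
      · exact le_of_eq h'.symm
  have hcov_ge_b : ∀ x y : α, x ⋖ y → b < y → b ≤ x := by
    intro x y h hy
    rcases hcb x with h' | h'
    · rcases h'.lt_or_eq with h' | h'
      · exact absurd hy (h.2 h')
      · exact le_of_eq h'.symm
    · exact h'
  -- connected components
  have hccα : Nat.card (coverGraph α).ConnectedComponent = 1 :=
    aux_cc (fun x y => ⟨x ⊔ y, le_sup_left, le_sup_right⟩)
  have hccB : Nat.card (coverGraph ↥(Set.Icc a b)).ConnectedComponent = 1 :=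
    aux_cc (fun x y => ⟨⟨b, hab, le_rfl⟩, x.2.2, y.2.2⟩)
  -- vertex count
  have d1 : Disjoint {x : α | x < a} (Set.Icc a b) :=
    Set.disjoint_left.mpr (fun x hx hxB => absurd hxB.1 hx.not_ge)
  have d2 : Disjoint ({x : α | x < a} ∪ Set.Icc a b) {x : α | b < x} := by
    rw [Set.disjoint_left]
    rintro x (hx | hx) hx2
    · exact absurd (hx.trans_le (hab.trans hx2.le)) (lt_irrefl x)
    · exact absurd (hx.2.trans_lt hx2) (lt_irrefl x)
  have huniv : (Set.univ : Set α) = {x : α | x < a} ∪ Set.Icc a b ∪ {x : α | b < x} := by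
    ext x
    simp only [Set.mem_univ, true_iff, Set.mem_union, Set.mem_Icc, Set.mem_setOf_eq]
    rcases hca x with h | h
    · rcases h.lt_or_eq with h | h
      · exact Or.inl (Or.inl h)
      · exact Or.inl (Or.inr ⟨le_of_eq h.symm, h.le.trans hab⟩)
    · rcases hcb x with h2 | h2
      · exact Or.inl (Or.inr ⟨h, h2⟩)
      · rcases h2.lt_or_eq with h2 | h2
        · exact Or.inr h2
        · exact Or.inl (Or.inr ⟨h, le_of_eq h2.symm⟩)
  have hv : (Nat.card α : ℤ) = (Set.Icc a b).ncard + {x : α | x < a}.ncard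
      + {x : α | b < x}.ncard := by
    rw [← Set.ncard_univ, huniv, Set.ncard_union_eq d2 (Set.toFinite _) (Set.toFinite _),
      Set.ncard_union_eq d1 (Set.toFinite _) (Set.toFinite _)]
    push_cast
    ring
  -- edge counts
  have c1 : {p : α × α | p.1 ⋖ p.2 ∧ p.1 < a}.ncard = {x : α | x < a}.ncard := by
    have himg : Prod.fst '' {p : α × α | p.1 ⋖ p.2 ∧ p.1 < a} = {x : α | x < a} := by
      ext x
      simp only [Set.mem_image, Set.mem_setOf_eq, Prod.exists]
      constructor
      · rintro ⟨u, v, ⟨_, hu⟩, rfl⟩; exact hu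
      · intro hx
        obtain ⟨z, hz, _⟩ := aux_covby_le hx
        exact ⟨x, z, ⟨hz, hx⟩, rfl⟩
    have hinj : Set.InjOn Prod.fst {p : α × α | p.1 ⋖ p.2 ∧ p.1 < a} := by
      rintro ⟨x, y⟩ ⟨hxy, hxa⟩ ⟨x', y'⟩ ⟨hxy', hxa'⟩ h
      dsimp only at h
      subst h
      suffices hyy : y = y' by rw [hyy]
      have hy : y ≤ a := hcov_le_a _ _ hxy hxa
      have hy' : y' ≤ a := hcov_le_a _ _ hxy' hxa'
      rcases hch1 y y' hy hy' with h | h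
      · rcases h.lt_or_eq with h | h
        · exact absurd h (hxy'.2 hxy.lt)
        · exact h
      · rcases h.lt_or_eq with h | h
        · exact absurd h (hxy.2 hxy'.lt)
        · exact h.symm
    rw [← himg, Set.ncard_image_of_injOn hinj]
  have c2 : {p : α × α | p.1 ⋖ p.2 ∧ b < p.2}.ncard = {x : α | b < x}.ncard := by
    have himg : Prod.snd '' {p : α × α | p.1 ⋖ p.2 ∧ b < p.2} = {x : α | b < x} := by
      ext y
      simp only [Set.mem_image, Set.mem_setOf_eq, Prod.exists]
      constructor
      · rintro ⟨u, v, ⟨_, hv⟩, rfl⟩; exact hv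
      · intro hy
        obtain ⟨z, hz1, hz2⟩ := aux_le_covby hy
        exact ⟨z, y, ⟨hz2, hy⟩, rfl⟩
    have hinj : Set.InjOn Prod.snd {p : α × α | p.1 ⋖ p.2 ∧ b < p.2} := by
      rintro ⟨x, y⟩ ⟨hxy, hby⟩ ⟨x', y'⟩ ⟨hxy', hby'⟩ h
      dsimp only at h
      subst h
      suffices hxx : x = x' by rw [hxx]
      have hx : b ≤ x := hcov_ge_b _ _ hxy hby
      have hx' : b ≤ x' := hcov_ge_b _ _ hxy' hby'
      rcases hch2 x x' hx hx' with h | h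
      · rcases h.lt_or_eq with h | h
        · exact absurd hxy'.lt (hxy.2 h)
        · exact h
      · rcases h.lt_or_eq with h | h
        · exact absurd hxy.lt (hxy'.2 h)
        · exact h.symm
    rw [← himg, Set.ncard_image_of_injOn hinj]
  have c0 : {p : α × α | p.1 ⋖ p.2 ∧ a ≤ p.1 ∧ p.2 ≤ b}.ncard
      = {p : ↥(Set.Icc a b) × ↥(Set.Icc a b) | p.1 ⋖ p.2}.ncard := by
    rw [← Nat.card_coe_set_eq, ← Nat.card_coe_set_eq]
    refine (Nat.card_eq_of_bijective (fun q =>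
      (⟨((q.1.1 : α), (q.1.2 : α)), (hcov q.1.1 q.1.2).mp q.2, q.1.1.2.1, q.1.2.2.2⟩ :
        {p : α × α | p.1 ⋖ p.2 ∧ a ≤ p.1 ∧ p.2 ≤ b})) ⟨?_, ?_⟩).symm
    · rintro ⟨⟨u, v⟩, huv⟩ ⟨⟨u', v'⟩, huv'⟩ h
      simp only [Subtype.mk_eq_mk, Prod.mk.injEq] at h
      exact Subtype.ext (Prod.ext (Subtype.ext h.1) (Subtype.ext h.2))
    · rintro ⟨⟨x, y⟩, hxy, hax, hyb⟩
      have hxB : x ∈ Set.Icc a b := ⟨hax, hxy.lt.le.trans hyb⟩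
      have hyB : y ∈ Set.Icc a b := ⟨hax.trans hxy.lt.le, hyb⟩
      exact ⟨⟨(⟨x, hxB⟩, ⟨y, hyB⟩), (hcov _ _).mpr hxy⟩, rfl⟩
  have dd1 : Disjoint {p : α × α | p.1 ⋖ p.2 ∧ p.1 < a}
      {p : α × α | p.1 ⋖ p.2 ∧ a ≤ p.1 ∧ p.2 ≤ b} :=
    Set.disjoint_left.mpr (fun p hp hp' => absurd hp'.2.1 hp.2.not_ge)
  have dd2 : Disjoint ({p : α × α | p.1 ⋖ p.2 ∧ p.1 < a}
      ∪ {p : α × α | p.1 ⋖ p.2 ∧ a ≤ p.1 ∧ p.2 ≤ b}) {p : α × α | p.1 ⋖ p.2 ∧ b < p.2} := by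
    rw [Set.disjoint_left]
    rintro p (⟨hp, hpa⟩ | ⟨hp, hpa, hpb⟩) ⟨hp', hpb'⟩
    · exact hp.2 hpa (hab.trans_lt hpb')
    · exact absurd (hpb.trans_lt hpb') (lt_irrefl _)
  have hEsplit : {p : α × α | p.1 ⋖ p.2}
      = {p : α × α | p.1 ⋖ p.2 ∧ p.1 < a} ∪ {p : α × α | p.1 ⋖ p.2 ∧ a ≤ p.1 ∧ p.2 ≤ b}
        ∪ {p : α × α | p.1 ⋖ p.2 ∧ b < p.2} := by
    ext ⟨x, y⟩
    simp only [Set.mem_setOf_eq, Set.mem_union]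
    constructor
    · intro h
      by_cases h1 : x < a
      · exact Or.inl (Or.inl ⟨h, h1⟩)
      · have hax : a ≤ x := by
          rcases hca x with h2 | h2
          · exact le_of_eq (h2.lt_or_eq.resolve_left h1).symm
          · exact h2
        by_cases h2 : b < y
        · exact Or.inr ⟨h, h2⟩
        · have hyb : y ≤ b := by
            rcases hcb y with h3 | h3
            · exact h3
            · exact le_of_eq ((h3.lt_or_eq.resolve_left h2)).symm
          exact Or.inl (Or.inr ⟨h, hax, hyb⟩)
    · rintro ((⟨h, -⟩ | ⟨h, -, -⟩) | ⟨h, -⟩) <;> exact h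
  have he : (Nat.card (coverGraph α).edgeSet : ℤ)
      = (Nat.card (coverGraph ↥(Set.Icc a b)).edgeSet : ℤ)
        + {x : α | x < a}.ncard + {x : α | b < x}.ncard := by
    rw [aux_edge_card, aux_edge_card, hEsplit,
      Set.ncard_union_eq dd2 (Set.toFinite _) (Set.toFinite _),
      Set.ncard_union_eq dd1 (Set.toFinite _) (Set.toFinite _), c1, c2, c0]
    push_cast
    ring
  have hvB : (Nat.card ↥(Set.Icc a b) : ℤ) = (Set.Icc a b).ncard := by
    rw [Nat.card_coe_set_eq]
  unfold nullity
  rw [hccα, hccB, he, hv, hvB]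
  ring
/-- A finite lattice which is not a chain contains a unique maximal sublattice `B`
which is a block; `L` is a direct sum `C₁ ⊕ B ⊕ C₂` with `C₁, C₂` (possibly empty)
chains, and `η(L) = η(B)`, `Red(L) = Red(B)`. -/
theorem stmt8 {α : Type*} [Lattice α] [Fintype α] [Nonempty α]
    (hnc : ¬ ∀ x y : α, x ≤ y ∨ y ≤ x) :
    ∃ B : Set α,
      (IsBlockSet B ∧ ∀ B' : Set α, IsBlockSet B' → B ⊆ B' → B = B') ∧
      (∀ B' : Set α,
        (IsBlockSet B' ∧ ∀ B'' : Set α, IsBlockSet B'' → B' ⊆ B'' → B' = B'') → B' = B) ∧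
      (∃ C₁ C₂ : Set α, IsChain (· ≤ ·) C₁ ∧ IsChain (· ≤ ·) C₂ ∧
        Disjoint C₁ B ∧ Disjoint C₁ C₂ ∧ Disjoint B C₂ ∧
        C₁ ∪ B ∪ C₂ = Set.univ ∧
        (∀ x ∈ C₁, ∀ y ∈ B ∪ C₂, x ≤ y) ∧ (∀ x ∈ B, ∀ y ∈ C₂, x ≤ y)) ∧
      nullity ↥B = nullity α ∧
      RedSet α = RedIn B := by
  classical
  push_neg at hnc
  obtain ⟨u, v, huv1, huv2⟩ := hnc
  have hmr_uv : MeetReducible (u ⊓ v) :=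
    ⟨u, v, fun h => huv1 (h.le.trans inf_le_right), fun h => huv2 (h.le.trans inf_le_left), rfl⟩
  have hjr_uv : JoinReducible (u ⊔ v) :=
    ⟨u, v, fun h => huv2 (le_sup_right.trans h.ge), fun h => huv1 (le_sup_left.trans h.ge), rfl⟩
  have hmr_inf : ∀ x y : α, MeetReducible x → MeetReducible y → MeetReducible (x ⊓ y) := by
    intro x y hx hy
    by_cases h1 : x ⊓ y = x
    · rwa [h1]
    by_cases h2 : x ⊓ y = y
    · rwa [h2]
    exact ⟨x, y, fun h => h1 h.symm, fun h => h2 h.symm, rfl⟩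
  have hjr_sup : ∀ x y : α, JoinReducible x → JoinReducible y → JoinReducible (x ⊔ y) := by
    intro x y hx hy
    by_cases h1 : x ⊔ y = x
    · rwa [h1]
    by_cases h2 : x ⊔ y = y
    · rwa [h2]
    exact ⟨x, y, fun h => h1 h.symm, fun h => h2 h.symm, rfl⟩
  set S : Finset α := Finset.univ.filter (fun x => MeetReducible x) with hS
  have hSne : S.Nonempty := ⟨u ⊓ v, by simp [hS, hmr_uv]⟩
  set T : Finset α := Finset.univ.filter (fun x => JoinReducible x) with hT
  have hTne : T.Nonempty := ⟨u ⊔ v, by simp [hT, hjr_uv]⟩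
  set a : α := S.inf' hSne id with haDef
  set b : α := T.sup' hTne id with hbDef
  have ha_mr : MeetReducible a :=
    Finset.inf'_mem {x : α | MeetReducible x} (fun x hx y hy => hmr_inf x y hx hy) S hSne id
      (fun i hi => by simpa [hS] using (Finset.mem_filter.mp hi).2)
  have hb_jr : JoinReducible b :=
    Finset.sup'_mem {x : α | JoinReducible x} (fun x hx y hy => hjr_sup x y hx hy) T hTne id
      (fun i hi => by simpa [hT] using (Finset.mem_filter.mp hi).2)
  have ha_le : ∀ x : α, MeetReducible x → a ≤ x := fun x hx =>
    Finset.inf'_le id (by simp [hS, hx])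
  have hb_ge : ∀ x : α, JoinReducible x → x ≤ b := fun x hx =>
    Finset.le_sup' id (by simp [hT, hx])
  have hlt_uv : u ⊓ v < u ⊔ v := by
    refine lt_of_le_of_ne inf_le_sup (fun h => huv1 ?_)
    calc u ≤ u ⊔ v := le_sup_left
    _ = u ⊓ v := h.symm
    _ ≤ v := inf_le_right
  have hab : a < b :=
    lt_of_le_of_lt (ha_le _ hmr_uv) (lt_of_lt_of_le hlt_uv (hb_ge _ hjr_uv))
  have hcomp_a : ∀ x : α, x ≤ a ∨ a ≤ x := by
    intro x
    by_contra h
    push_neg at h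
    have hmr : MeetReducible (x ⊓ a) :=
      ⟨x, a, fun he => h.1 (he.le.trans inf_le_right),
        fun he => h.2 (he.le.trans inf_le_left), rfl⟩
    exact h.2 ((ha_le _ hmr).trans inf_le_left)
  have hcomp_b : ∀ x : α, x ≤ b ∨ b ≤ x := by
    intro x
    by_contra h
    push_neg at h
    have hjr : JoinReducible (x ⊔ b) :=
      ⟨x, b, fun he => h.2 (le_sup_right.trans he.ge),
        fun he => h.1 (le_sup_left.trans he.ge), rfl⟩
    exact h.1 (le_sup_left.trans (hb_ge _ hjr))
  have hchain_le_a : ∀ x y : α, x ≤ a → y ≤ a → x ≤ y ∨ y ≤ x := by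
    intro x y hx hy
    by_contra h
    push_neg at h
    have hmr : MeetReducible (x ⊓ y) :=
      ⟨x, y, fun he => h.1 (he.le.trans inf_le_right),
        fun he => h.2 (he.le.trans inf_le_left), rfl⟩
    exact h.1 (hx.trans ((ha_le _ hmr).trans inf_le_right))
  have hchain_ge_b : ∀ x y : α, b ≤ x → b ≤ y → x ≤ y ∨ y ≤ x := by
    intro x y hx hy
    by_contra h
    push_neg at h
    have hjr : JoinReducible (x ⊔ y) :=
      ⟨x, y, fun he => h.2 (le_sup_right.trans he.ge),
        fun he => h.1 (le_sup_left.trans he.ge), rfl⟩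
    exact h.1 (le_sup_left.trans ((hb_ge _ hjr).trans hy))
  have hkey : ∀ x : α, Reducible x → x ∈ RedIn (Set.Icc a b) := by
    intro x hx
    rcases hx with ⟨y, z, hy, hz, hyz⟩ | ⟨y, z, hy, hz, hyz⟩
    · have hyx : y < x := lt_of_le_of_ne (hyz ▸ le_sup_left) hy
      have hzx : z < x := lt_of_le_of_ne (hyz ▸ le_sup_right) hz
      have hy2 : ¬ y ≤ z := fun h => hz (by rw [← hyz, sup_eq_right.mpr h])
      have hz2 : ¬ z ≤ y := fun h => hy (by rw [← hyz, sup_eq_left.mpr h])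
      have hmr : MeetReducible (y ⊓ z) :=
        ⟨y, z, fun h => hy2 (h.le.trans inf_le_right), fun h => hz2 (h.le.trans inf_le_left), rfl⟩
      have hay : a ≤ y := (ha_le _ hmr).trans inf_le_left
      have haz : a ≤ z := (ha_le _ hmr).trans inf_le_right
      have hxb : x ≤ b := hb_ge x ⟨y, z, hy, hz, hyz⟩
      exact ⟨⟨hay.trans hyx.le, hxb⟩,
        Or.inl ⟨y, ⟨hay, hyx.le.trans hxb⟩, z, ⟨haz, hzx.le.trans hxb⟩, hy, hz, hyz⟩⟩
    · have hxy : x < y := lt_of_le_of_ne (hyz ▸ inf_le_left) (Ne.symm hy)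
      have hxz : x < z := lt_of_le_of_ne (hyz ▸ inf_le_right) (Ne.symm hz)
      have hy2 : ¬ y ≤ z := fun h => hy (by rw [← hyz, inf_eq_left.mpr h])
      have hz2 : ¬ z ≤ y := fun h => hz (by rw [← hyz, inf_eq_right.mpr h])
      have hjr : JoinReducible (y ⊔ z) :=
        ⟨y, z, fun h => hz2 (le_sup_right.trans h.ge), fun h => hy2 (le_sup_left.trans h.ge), rfl⟩
      have hyb : y ≤ b := le_sup_left.trans (hb_ge _ hjr)
      have hzb : z ≤ b := le_sup_right.trans (hb_ge _ hjr)
      have hax : a ≤ x := ha_le x ⟨y, z, hy, hz, hyz⟩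
      exact ⟨⟨hax, hxy.le.trans hyb⟩,
        Or.inr ⟨y, ⟨hax.trans hxy.le, hyb⟩, z, ⟨hax.trans hxz.le, hzb⟩, hy, hz, hyz⟩⟩
  have hred : RedSet α = RedIn (Set.Icc a b) := by
    ext x
    constructor
    · exact hkey x
    · rintro ⟨hxB, ⟨y, hyB, z, hzB, hy, hz, hyz⟩ | ⟨y, hyB, z, hzB, hy, hz, hyz⟩⟩
      · exact Or.inl ⟨y, z, hy, hz, hyz⟩
      · exact Or.inr ⟨y, z, hy, hz, hyz⟩
  have hblock : IsBlockSet (Set.Icc a b) := by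
    refine ⟨fun x hx y hy => ⟨⟨le_inf hx.1 hy.1, inf_le_left.trans hx.2⟩,
      ⟨hx.1.trans le_sup_left, sup_le hx.2 hy.2⟩⟩, ?_, ?_⟩
    · obtain ⟨y, z, hy, hz, hyz⟩ := hb_jr
      have hyb : y ≤ b := hyz ▸ le_sup_left
      have hzb : z ≤ b := hyz ▸ le_sup_right
      refine ⟨b, ⟨hab.le, le_rfl⟩, fun x hx => hx.2, y ⊔ a, ⟨le_sup_right, sup_le hyb hab.le⟩,
        z ⊔ a, ⟨le_sup_right, sup_le hzb hab.le⟩, ?_, ?_, ?_⟩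
      · rcases hcomp_a y with h | h
        · rw [sup_eq_right.mpr h]; exact hab.ne
        · rw [sup_eq_left.mpr h]; exact hy
      · rcases hcomp_a z with h | h
        · rw [sup_eq_right.mpr h]; exact hab.ne
        · rw [sup_eq_left.mpr h]; exact hz
      · rw [sup_sup_sup_comm, sup_idem, hyz, sup_eq_left.mpr hab.le]
    · obtain ⟨y, z, hy, hz, hyz⟩ := ha_mr
      have hya : a ≤ y := hyz ▸ inf_le_left
      have hza : a ≤ z := hyz ▸ inf_le_right
      refine ⟨a, ⟨le_rfl, hab.le⟩, fun x hx => hx.1, y ⊓ b, ⟨le_inf hya hab.le, inf_le_right⟩,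
        z ⊓ b, ⟨le_inf hza hab.le, inf_le_right⟩, ?_, ?_, ?_⟩
      · rcases hcomp_b y with h | h
        · rw [inf_eq_left.mpr h]; exact hy
        · rw [inf_eq_right.mpr h]; exact hab.ne'
      · rcases hcomp_b z with h | h
        · rw [inf_eq_left.mpr h]; exact hz
        · rw [inf_eq_right.mpr h]; exact hab.ne'
      · rw [inf_inf_inf_comm, inf_idem, hyz, inf_eq_left.mpr hab.le]
  have hmax : ∀ B' : Set α, IsBlockSet B' → B' ⊆ Set.Icc a b := by
    rintro B' ⟨hcl, ⟨t, htB, htub, y, hyB, z, hzB, hyt, hzt, hyzt⟩,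
      ⟨c, hcB, hclb, y', hy'B, z', hz'B, hy'c, hz'c, hyzc⟩⟩
    have ht : t ≤ b := hb_ge t ⟨y, z, hyt, hzt, hyzt⟩
    have hc : a ≤ c := ha_le c ⟨y', z', hy'c, hz'c, hyzc⟩
    intro x hx
    exact ⟨hc.trans (hclb x hx), (htub x hx).trans ht⟩
  refine ⟨Set.Icc a b, ⟨hblock, fun B' hB' hsub => Set.Subset.antisymm hsub (hmax B' hB')⟩,
    fun B' hB' => hB'.2 (Set.Icc a b) hblock (hmax B' hB'.1), ?_,
    aux_nullity hab.le hcomp_a hcomp_b hchain_le_a hchain_ge_b, hred⟩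
  refine ⟨{x : α | x < a}, {x : α | b < x}, ?_, ?_, ?_, ?_, ?_, ?_, ?_, ?_⟩
  · intro x hx y hy _
    exact hchain_le_a x y (Set.mem_setOf_eq ▸ hx).le (Set.mem_setOf_eq ▸ hy).le
  · intro x hx y hy _
    exact hchain_ge_b x y (Set.mem_setOf_eq ▸ hx).le (Set.mem_setOf_eq ▸ hy).le
  · exact Set.disjoint_left.mpr (fun x hx hxB => absurd hxB.1 hx.not_ge)
  · exact Set.disjoint_left.mpr
      (fun x hx hx2 => absurd (hx.trans (hab.trans hx2)) (lt_irrefl x))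
  · exact Set.disjoint_left.mpr (fun x hx hx2 => absurd (hx.2.trans_lt hx2) (lt_irrefl x))
  · ext x
    simp only [Set.mem_union, Set.mem_univ, iff_true, Set.mem_Icc, Set.mem_setOf_eq]
    rcases hcomp_a x with h | h
    · rcases h.lt_or_eq with h | h
      · exact Or.inl (Or.inl h)
      · exact Or.inl (Or.inr ⟨le_of_eq h.symm, h.le.trans hab.le⟩)
    · rcases hcomp_b x with h2 | h2
      · exact Or.inl (Or.inr ⟨h, h2⟩)
      · rcases h2.lt_or_eq with h2 | h2
        · exact Or.inr h2
        · exact Or.inl (Or.inr ⟨h, le_of_eq h2.symm⟩)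
  · rintro x hx y (hy | hy)
    · exact (hx.trans_le hy.1).le
    · exact (hx.trans (hab.trans hy)).le
  · intro x hx y hy
    exact (hx.2.trans_lt hy).le
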